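/- Consider the coupled system ẋ^i = f_k(x^i) + ∑_{j} a_{ij} w_{ij} Γ (x^j − x^i) for i ∈ C_k. The cluster synchronization manifold S (states constant on each cluster) is invariant under this system for arbitrary continuous functions f_k if and only if for every pair of distinct clusters k ≠ k' and every i ∈ C_k, the quantity α_{i,k'} = ∑_{j∈C_{k'}} a_{ij} w_{ij} depends only on (k,k') and not on i. -/
import Mathlib


open Finset

theorem invariance_iff_common_intercluster_coupling
    (m n K : ℕ) (c : Fin m → Fin K) (hc : Function.Surjective c)
    (a : Fin m → Fin m → ℝ) (ha : ∀ i j, a i j = 0 ∨ a i j = 1)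
    (w : Fin m → Fin m → ℝ) (Γ : Matrix (Fin n) (Fin n) ℝ) (hΓ : Γ ≠ 0) :
    -- invariance: for every choice of continuous f₁,…,f_K the vector field is
    -- tangent to the cluster synchronization manifold S
    (∀ f : Fin K → (Fin n → ℝ) → (Fin n → ℝ), (∀ k, Continuous (f k)) →
      ∀ x : Fin m → Fin n → ℝ, (∀ i j, c i = c j → x i = x j) →
        ∀ i j, c i = c j →
          (f (c i) (x i) + ∑ l, (a i l * w i l) • Γ.mulVec (x l - x i)) =
          (f (c j) (x j) + ∑ l, (a j l * w j l) • Γ.mulVec (x l - x j)))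
    ↔
    (∀ k k' : Fin K, k ≠ k' → ∀ i i' : Fin m, c i = k → c i' = k →
      ∑ j ∈ univ.filter (fun j => c j = k'), a i j * w i j =
      ∑ j ∈ univ.filter (fun j => c j = k'), a i' j * w i' j) := by
  constructor
  · -- invariance → common intercluster coupling
    intro H k k' hkk' i i' hi hi'
    obtain ⟨p, q, hpq⟩ : ∃ p q, Γ p q ≠ 0 := by
      by_contra h
      push_neg at h
      exact hΓ (by ext p q; simpa using h p q)
    set v : Fin n → ℝ := Pi.single q 1 with hv
    have hΓv : Γ.mulVec v p = Γ p q := by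
      simp [Matrix.mulVec, dotProduct, hv, Pi.single_apply, mul_comm]
    set x : Fin m → Fin n → ℝ := fun l => if c l = k' then v else 0 with hx
    have hxconst : ∀ i j, c i = c j → x i = x j := by
      intro i j h; simp only [hx, h]
    have lem : ∀ i0 : Fin m, c i0 = k →
        ∑ l, (a i0 l * w i0 l) • Γ.mulVec (x l - x i0)
          = (∑ j ∈ univ.filter (fun j => c j = k'), a i0 j * w i0 j) • Γ.mulVec v := by
      intro i0 hi0
      have hxi0 : x i0 = 0 := by
        simp only [hx, hi0]
        exact if_neg hkk'
      rw [Finset.sum_smul]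
      rw [← Finset.sum_filter_add_sum_filter_not univ (fun l => c l = k')]
      have h2 : ∑ l ∈ univ.filter (fun l => ¬ c l = k'),
          (a i0 l * w i0 l) • Γ.mulVec (x l - x i0) = 0 := by
        apply Finset.sum_eq_zero
        intro l hl
        simp only [Finset.mem_filter] at hl
        have : x l = 0 := by simp only [hx]; exact if_neg hl.2
        simp [this, hxi0, Matrix.mulVec_zero]
      rw [h2, add_zero]
      apply Finset.sum_congr rfl
      intro l hl
      simp only [Finset.mem_filter] at hl
      have : x l = v := by simp only [hx]; exact if_pos hl.2
      simp [this, hxi0]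
    have key := H (fun _ _ => 0) (fun _ => continuous_const) x hxconst i i'
      (by rw [hi, hi'])
    simp only [zero_add] at key
    rw [lem i hi, lem i' hi'] at key
    have key' := congrFun key p
    simp only [Pi.smul_apply, smul_eq_mul, hΓv] at key'
    exact mul_right_cancel₀ hpq key'
  · -- common intercluster coupling → invariance
    intro hα f hf x hxconst i j hij
    have hxij : x i = x j := hxconst i j hij
    have hfeq : f (c i) (x i) = f (c j) (x j) := by rw [hij, hxij]
    rw [hfeq]
    congr 1
    -- choose representatives of clusters
    choose r hr using hc
    have hsum : ∀ i0 : Fin m,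
        ∑ l, (a i0 l * w i0 l) • Γ.mulVec (x l - x i0)
          = ∑ k' : Fin K, (∑ l ∈ univ.filter (fun l => c l = k'), a i0 l * w i0 l)
              • Γ.mulVec (x (r k') - x i0) := by
      intro i0
      rw [← Finset.sum_fiberwise univ c (fun l => (a i0 l * w i0 l) • Γ.mulVec (x l - x i0))]
      apply Finset.sum_congr rfl
      intro k' _
      rw [Finset.sum_smul]
      apply Finset.sum_congr rfl
      intro l hl
      simp only [Finset.mem_filter] at hl
      have : x l = x (r k') := hxconst l (r k') (by rw [hl.2, hr])
      rw [this]
    rw [hsum i, hsum j]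
    apply Finset.sum_congr rfl
    intro k' _
    by_cases hk' : c i = k'
    · have h1 : x (r k') = x i := hxconst (r k') i (by rw [hr, hk'])
      simp [h1, hxij]
    · have hcoef := hα (c i) k' (Ne.symm (fun h => hk' h.symm)) i j rfl hij.symm
      rw [hcoef, hxij]
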